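/- Let Q be a smooth manifold, ϑ a closed one-form on Q, θ := π_Q*ϑ, and Ω_θ^κ := (π^κ)*(−dΘ_Q + (π_Q*ϑ)∧Θ_Q) the two-forms of the locally conformal k-symplectic manifold T_{k,θ}*Q. For any section γ = (γ^1,…,γ^k) of the projection π_Q : T_{k,θ}*Q → Q one has γ*Ω_θ^κ = (γ^κ)*Ω_θ = −d_ϑγ^κ = −(dγ^κ − ϑ∧γ^κ) for each κ. Consequently, the image of γ is a Lagrangian submanifold of T_{k,θ}*Q if and only if d_ϑγ^κ = 0 for all κ = 1,…,k. -/

import Mathlib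

noncomputable section

open scoped BigOperators

variable {E F : Type*} [NormedAddCommGroup E] [NormedSpace ℝ E]
  [NormedAddCommGroup F] [NormedSpace ℝ F]

/-- The exterior derivative of a smooth function, as a one-form. -/
def extDer0 (f : E → ℝ) : E → E → ℝ := fun x v => fderiv ℝ f x v

/-- The exterior derivative of a one-form. -/
def extDer1 (α : E → E → ℝ) : E → E → E → ℝ := fun x u v =>
  fderiv ℝ (fun y => α y v) x u - fderiv ℝ (fun y => α y u) x v

/-- The exterior derivative of a two-form. -/
def extDer2 (ω : E → E → E → ℝ) : E → E → E → E → ℝ := fun x u v w =>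
  fderiv ℝ (fun y => ω y v w) x u - fderiv ℝ (fun y => ω y u w) x v +
    fderiv ℝ (fun y => ω y u v) x w

/-- Wedge product of two one-forms. -/
def wedge11 (α β : E → E → ℝ) : E → E → E → ℝ := fun x u v =>
  α x u * β x v - α x v * β x u

/-- Wedge product of a one-form with a two-form. -/
def wedge12 (θ : E → E → ℝ) (ω : E → E → E → ℝ) : E → E → E → E → ℝ := fun x u v w =>
  θ x u * ω x v w - θ x v * ω x u w + θ x w * ω x u v

/-- Pullback of a one-form along a smooth map. -/
def pb1 (φ : E → F) (α : F → F → ℝ) : E → E → ℝ := fun x v => α (φ x) (fderiv ℝ φ x v)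

/-- Pullback of a two-form along a smooth map. -/
def pb2 (φ : E → F) (ω : F → F → F → ℝ) : E → E → E → ℝ := fun x u v =>
  ω (φ x) (fderiv ℝ φ x u) (fderiv ℝ φ x v)

/-- Model for the cotangent bundle `T*Q` of the manifold `Q = E`. -/
abbrev Cot (E : Type*) [NormedAddCommGroup E] [NormedSpace ℝ E] := E × (E →L[ℝ] ℝ)

/-- The tautological (canonical) one-form `Θ_Q` on `T*Q`. -/
def taut : Cot E → Cot E → ℝ := fun z v => z.2 v.1

/-- The canonical symplectic two-form `Ω_Q = -dΘ_Q` on `T*Q`. -/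
def canSymp : Cot E → Cot E → Cot E → ℝ := fun z u v => -(extDer1 taut z u v)
/-- The almost symplectic two-form `Ω_θ = -dΘ_Q + (π_Q*ϑ) ∧ Θ_Q` on `T*Q`,
for the Lee form `θ = π_Q*ϑ`. -/
def lcsForm (ϑ : E → E →L[ℝ] ℝ) : Cot E → Cot E → Cot E → ℝ := fun z u v =>
  canSymp z u v + (ϑ z.1 u.1 * taut z v - ϑ z.1 v.1 * taut z u)
/-- Model for the `k`-cotangent bundle `T_k*Q = T*Q ⊕_Q ⋯ ⊕_Q T*Q` of `Q = E`. -/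
abbrev kCot (E : Type*) [NormedAddCommGroup E] [NormedSpace ℝ E] (k : ℕ) :=
  E × (Fin k → E →L[ℝ] ℝ)

/-- The projection `π^κ : T_k*Q → T*Q` onto the `κ`-th summand. -/
def kproj {k : ℕ} (κ : Fin k) : kCot E k → Cot E := fun z => (z.1, z.2 κ)

/-- The canonical two-forms `Ω^κ = (π^κ)*Ω_Q` on `T_k*Q`
(`π^κ` is linear, so its pullback is plain composition). -/
def kForm {k : ℕ} (κ : Fin k) : kCot E k → kCot E k → kCot E k → ℝ :=
  fun z u v => canSymp (kproj κ z) (kproj κ u) (kproj κ v)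
/-- The two-forms `Ω_θ^κ = (π^κ)*Ω_θ` of the locally conformal `k`-symplectic
structure on `T_{k,θ}*Q`. -/
def lcksForm (ϑ : E → E →L[ℝ] ℝ) {k : ℕ} (κ : Fin k) :
    kCot E k → kCot E k → kCot E k → ℝ :=
  fun z u v => lcsForm ϑ (kproj κ z) (kproj κ u) (kproj κ v)
/-- The `k`-symplectic orthogonal of a set `S` of tangent vectors at `z`, with respect
to a family of two-forms `Ω^κ`. -/
def kPerp {k : ℕ} (Ω : Fin k → kCot E k → kCot E k → kCot E k → ℝ) (z : kCot E k)
    (S : Set (kCot E k)) : Set (kCot E k) :=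
  {v | ∀ w ∈ S, ∀ κ, Ω κ z v w = 0}


namespace SectionPullbackAux

variable {E : Type*} [NormedAddCommGroup E] [NormedSpace ℝ E]

lemma fderiv_eval {k : ℕ} (γ : E → Fin k → E →L[ℝ] ℝ) (hγ : Differentiable ℝ γ)
    (κ : Fin k) (v q u : E) :
    fderiv ℝ (fun y => γ y κ v) q u = fderiv ℝ γ q u κ v := by
  have h2 : HasFDerivAt (fun y => γ y κ v)
      (((ContinuousLinearMap.apply ℝ ℝ v).comp
        (ContinuousLinearMap.proj (R := ℝ) (φ := fun _ : Fin k => E →L[ℝ] ℝ) κ)).comp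
        (fderiv ℝ γ q)) q :=
    (((ContinuousLinearMap.apply ℝ ℝ v).comp
      (ContinuousLinearMap.proj (R := ℝ) (φ := fun _ : Fin k => E →L[ℝ] ℝ) κ))).hasFDerivAt.comp q
      (hγ q).hasFDerivAt
  rw [h2.fderiv]; rfl

lemma fderiv_taut (z u v : Cot E) :
    fderiv ℝ (fun y : Cot E => taut y v) z u = u.2 v.1 := by
  have h : HasFDerivAt (fun y : Cot E => taut y v)
      ((ContinuousLinearMap.apply ℝ ℝ v.1).comp
        (ContinuousLinearMap.snd ℝ E (E →L[ℝ] ℝ))) z :=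
    ((ContinuousLinearMap.apply ℝ ℝ v.1).comp
        (ContinuousLinearMap.snd ℝ E (E →L[ℝ] ℝ))).hasFDerivAt
  rw [h.fderiv]; rfl

lemma canSymp_eval (z u v : Cot E) : canSymp z u v = v.2 u.1 - u.2 v.1 := by
  simp only [canSymp, extDer1, fderiv_taut]; ring

lemma hasFDerivAt_sec {k : ℕ} (γ : E → Fin k → E →L[ℝ] ℝ) (hγ : Differentiable ℝ γ)
    (Γ : E → kCot E k) (hΓ : ∀ q, Γ q = (q, γ q)) (q : E) :
    HasFDerivAt Γ ((ContinuousLinearMap.id ℝ E).prod (fderiv ℝ γ q)) q := by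
  have : Γ = fun x => ((x, γ x) : kCot E k) := funext hΓ
  rw [this]
  exact HasFDerivAt.prodMk (hasFDerivAt_id q) (hγ q).hasFDerivAt

lemma fderiv_sec {k : ℕ} (γ : E → Fin k → E →L[ℝ] ℝ) (hγ : Differentiable ℝ γ)
    (Γ : E → kCot E k) (hΓ : ∀ q, Γ q = (q, γ q)) (q u : E) :
    fderiv ℝ Γ q u = (u, fderiv ℝ γ q u) := by
  rw [(hasFDerivAt_sec γ hγ Γ hΓ q).fderiv]; rfl

lemma fderiv_secκ {k : ℕ} (γ : E → Fin k → E →L[ℝ] ℝ) (hγ : Differentiable ℝ γ)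
    (κ : Fin k) (q u : E) :
    fderiv ℝ (fun x => ((x, γ x κ) : Cot E)) q u = (u, fderiv ℝ γ q u κ) := by
  have hκ : HasFDerivAt (fun x => γ x κ)
      ((ContinuousLinearMap.proj (R := ℝ) (φ := fun _ : Fin k => E →L[ℝ] ℝ) κ).comp
        (fderiv ℝ γ q)) q :=
    (ContinuousLinearMap.proj (R := ℝ) (φ := fun _ : Fin k => E →L[ℝ] ℝ) κ).hasFDerivAt.comp q
      (hγ q).hasFDerivAt
  have h : HasFDerivAt (fun x => ((x, γ x κ) : Cot E))
      ((ContinuousLinearMap.id ℝ E).prod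
        ((ContinuousLinearMap.proj (R := ℝ) (φ := fun _ : Fin k => E →L[ℝ] ℝ) κ).comp
          (fderiv ℝ γ q))) q := HasFDerivAt.prodMk (hasFDerivAt_id q) hκ
  rw [h.fderiv]; rfl

end SectionPullbackAux

/-- For a section `γ = (γ^1,…,γ^k)` of `π_Q : T_{k,θ}*Q → Q`
(realized as `Γ q = (q, γ q)`) one has
`γ*Ω_θ^κ = (γ^κ)*Ω_θ = -d_ϑγ^κ = -(dγ^κ - ϑ∧γ^κ)` for each `κ`; consequently the
image of `γ` is a Lagrangian submanifold of `T_{k,θ}*Q` iff `d_ϑγ^κ = 0` for all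
`κ`. -/
theorem section_pullback_lcks
    [FiniteDimensional ℝ E] {k : ℕ}
    (ϑ : E → E →L[ℝ] ℝ) (hϑs : ContDiff ℝ (⊤ : ℕ∞) ϑ)
    (hϑc : ∀ x u v, extDer1 (fun y w => ϑ y w) x u v = 0)
    (γ : E → Fin k → E →L[ℝ] ℝ) (hγs : ContDiff ℝ (⊤ : ℕ∞) γ)
    (Γ : E → kCot E k) (hΓ : ∀ q, Γ q = (q, γ q)) :
    (∀ (κ : Fin k) q u v,
      pb2 Γ (lcksForm ϑ κ) q u v
          = pb2 (fun x => ((x, γ x κ) : Cot E)) (lcsForm ϑ) q u v ∧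
      pb2 Γ (lcksForm ϑ κ) q u v
          = -(extDer1 (fun y w => γ y κ w) q u v
              - wedge11 (fun y w => ϑ y w) (fun y w => γ y κ w) q u v)) ∧
    ((∀ q, kPerp (fun κ : Fin k => lcksForm ϑ κ) (Γ q)
        (Set.range (fderiv ℝ Γ q)) = Set.range (fderiv ℝ Γ q)) ↔
      (∀ (κ : Fin k) q u v,
        extDer1 (fun y w => γ y κ w) q u v
          - wedge11 (fun y w => ϑ y w) (fun y w => γ y κ w) q u v = 0)) := by

  have hγ : Differentiable ℝ γ := hγs.differentiable (by simp)
  open SectionPullbackAux in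
  -- key formula for the pullback
  have key : ∀ (κ : Fin k) q u v, pb2 Γ (lcksForm ϑ κ) q u v
      = fderiv ℝ γ q v κ u - fderiv ℝ γ q u κ v
        + (ϑ q u * γ q κ v - ϑ q v * γ q κ u) := by
    intro κ q u v
    simp only [pb2, lcksForm, lcsForm, fderiv_sec γ hγ Γ hΓ, hΓ q, kproj,
      canSymp_eval, taut]
  open SectionPullbackAux in
  have key2 : ∀ (κ : Fin k) q u v,
      extDer1 (fun y w => γ y κ w) q u v
        - wedge11 (fun y w => ϑ y w) (fun y w => γ y κ w) q u v
      = fderiv ℝ γ q u κ v - fderiv ℝ γ q v κ u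
        - (ϑ q u * γ q κ v - ϑ q v * γ q κ u) := by
    intro κ q u v
    simp only [extDer1, wedge11, fderiv_eval γ hγ]
  open SectionPullbackAux in
  constructor
  · intro κ q u v
    constructor
    · rw [key]
      simp only [pb2, lcsForm, fderiv_secκ γ hγ, kproj, canSymp_eval, taut]
    · rw [key, key2]; ring
  · constructor
    · intro h κ q u v
      have hm : fderiv ℝ Γ q u ∈ kPerp (fun κ : Fin k => lcksForm ϑ κ) (Γ q)
          (Set.range (fderiv ℝ Γ q)) := by
        rw [h q]; exact ⟨u, rfl⟩
      have h0 := hm (fderiv ℝ Γ q v) ⟨v, rfl⟩ κ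
      have h0' : pb2 Γ (lcksForm ϑ κ) q u v = 0 := h0
      rw [key] at h0'
      rw [key2]
      linarith
    · intro h q
      ext V
      constructor
      · intro hV
        have hAll : ∀ (κ : Fin k) (u : E), V.2 κ u = fderiv ℝ γ q V.1 κ u := by
          intro κ u
          have h1 := hV (fderiv ℝ Γ q u) ⟨u, rfl⟩ κ
          simp only [lcksForm, lcsForm, fderiv_sec γ hγ Γ hΓ, hΓ q, kproj,
            canSymp_eval, taut] at h1
          have h2 := h κ q u V.1
          rw [key2] at h2
          linarith
        refine ⟨V.1, ?_⟩
        rw [fderiv_sec γ hγ Γ hΓ]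
        refine Prod.ext rfl ?_
        funext κ
        exact (ContinuousLinearMap.ext fun u => (hAll κ u).symm)
      · rintro ⟨u, rfl⟩ w ⟨v, rfl⟩ κ
        have h0 : pb2 Γ (lcksForm ϑ κ) q u v = 0 := by
          rw [key]
          have h2 := h κ q u v
          rw [key2] at h2
          linarith
        exact h0
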